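/- There exists a twice continuously differentiable function f₃ : ℝ → ℝ with f₃(0) = 0 and f₃(1) = 0 such that for all v ∈ [0,1], −f₃''(v) − π² * f₃(v) = −2*π * ( f₂(v) − 2 * (∫_0^1 f(w)*f₂(w) dw) * f(v) ). -/

import Mathlib

open Real MeasureTheory

/-- The limiting eigenfunction `f(v) = sin(πv)`. -/
noncomputable def f (v : ℝ) : ℝ := Real.sin (π * v)

/-- The second-order correction term
`f₂(v) = (−v²/2 + v − (1/2 + 3/(8π²)))·sin(πv)`. -/
noncomputable def f₂ (v : ℝ) : ℝ :=
  (-v ^ 2 / 2 + v - (1 / 2 + 3 / (8 * π ^ 2))) * Real.sin (π * v)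

noncomputable def F₃ (v : ℝ) : ℝ :=
  (v ^ 3 / 6 - v ^ 2 / 2 + v / 3) * Real.cos (π * v)
    + (v / (2 * π) - v ^ 2 / (4 * π)) * Real.sin (π * v)

noncomputable def F₃d (v : ℝ) : ℝ :=
  (v ^ 2 / 2 - v + 1 / 3) * Real.cos (π * v)
    - π * (v ^ 3 / 6 - v ^ 2 / 2 + v / 3) * Real.sin (π * v)
    + (1 / (2 * π) - v / (2 * π)) * Real.sin (π * v)
    + π * (v / (2 * π) - v ^ 2 / (4 * π)) * Real.cos (π * v)

noncomputable def F₃dd (v : ℝ) : ℝ :=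
  (v - 1) * Real.cos (π * v)
    - 2 * π * (v ^ 2 / 2 - v + 1 / 3) * Real.sin (π * v)
    - π ^ 2 * (v ^ 3 / 6 - v ^ 2 / 2 + v / 3) * Real.cos (π * v)
    + (-1 / (2 * π)) * Real.sin (π * v)
    + 2 * π * (1 / (2 * π) - v / (2 * π)) * Real.cos (π * v)
    - π ^ 2 * (v / (2 * π) - v ^ 2 / (4 * π)) * Real.sin (π * v)

lemma hs (v : ℝ) : HasDerivAt (fun v : ℝ => Real.sin (π * v)) (π * Real.cos (π * v)) v := by
  have h := (Real.hasDerivAt_sin (π * v)).comp v ((hasDerivAt_id v).const_mul π)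
  refine h.congr_deriv ?_; ring

lemma hc (v : ℝ) : HasDerivAt (fun v : ℝ => Real.cos (π * v)) (-(π * Real.sin (π * v))) v := by
  have h := (Real.hasDerivAt_cos (π * v)).comp v ((hasDerivAt_id v).const_mul π)
  refine h.congr_deriv ?_; ring

lemma hF₃d (v : ℝ) : HasDerivAt F₃ (F₃d v) v := by
  have h1 : HasDerivAt (fun v : ℝ => v ^ 3 / 6 - v ^ 2 / 2 + v / 3)
      (v ^ 2 / 2 - v + 1 / 3) v := by
    have := (((hasDerivAt_pow 3 v).div_const 6).sub ((hasDerivAt_pow 2 v).div_const 2)).add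
      ((hasDerivAt_id v).div_const 3)
    refine this.congr_deriv ?_
    ring
  have h2 : HasDerivAt (fun v : ℝ => v / (2 * π) - v ^ 2 / (4 * π))
      (1 / (2 * π) - v / (2 * π)) v := by
    have := ((hasDerivAt_id v).div_const (2 * π)).sub ((hasDerivAt_pow 2 v).div_const (4 * π))
    refine this.congr_deriv ?_
    ring
  have := (h1.mul (hc v)).add (h2.mul (hs v))
  refine this.congr_deriv ?_
  unfold F₃d; ring

lemma hF₃dd (v : ℝ) : HasDerivAt F₃d (F₃dd v) v := by
  have h1 : HasDerivAt (fun v : ℝ => v ^ 2 / 2 - v + 1 / 3) (v - 1) v := by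
    have := (((hasDerivAt_pow 2 v).div_const 2).sub (hasDerivAt_id v)).add_const ((1:ℝ)/3)
    refine this.congr_deriv ?_
    ring
  have h2 : HasDerivAt (fun v : ℝ => π * (v ^ 3 / 6 - v ^ 2 / 2 + v / 3))
      (π * (v ^ 2 / 2 - v + 1 / 3)) v := by
    have := ((((hasDerivAt_pow 3 v).div_const 6).sub ((hasDerivAt_pow 2 v).div_const 2)).add
      ((hasDerivAt_id v).div_const 3)).const_mul π
    refine this.congr_deriv ?_
    ring
  have h3 : HasDerivAt (fun v : ℝ => 1 / (2 * π) - v / (2 * π)) (-1 / (2 * π)) v := by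
    have := ((hasDerivAt_id v).div_const (2 * π)).const_sub (1 / (2 * π))
    refine this.congr_deriv ?_
    ring
  have h4 : HasDerivAt (fun v : ℝ => π * (v / (2 * π) - v ^ 2 / (4 * π)))
      (π * (1 / (2 * π) - v / (2 * π))) v := by
    have := (((hasDerivAt_id v).div_const (2 * π)).sub
      ((hasDerivAt_pow 2 v).div_const (4 * π))).const_mul π
    refine this.congr_deriv ?_
    ring
  have := (((h1.mul (hc v)).sub (h2.mul (hs v))).add (h3.mul (hs v))).add (h4.mul (hc v))
  refine this.congr_deriv ?_
  unfold F₃dd; ring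

/-- antiderivative of f·f₂ -/
noncomputable def Fi (v : ℝ) : ℝ :=
  (-v ^ 3 / 12 + v ^ 2 / 4 - (1 / 2 + 3 / (8 * π ^ 2)) * v / 2)
    - ((-v ^ 2 / 2 + v - (1 / 2 + 3 / (8 * π ^ 2))) / (4 * π) + 1 / (16 * π ^ 3))
        * (2 * Real.sin (π * v) * Real.cos (π * v))
    - ((1 - v) / (8 * π ^ 2)) * (1 - 2 * (Real.sin (π * v) * Real.sin (π * v)))

lemma hFi (v : ℝ) : HasDerivAt Fi (f v * f₂ v) v := by
  have hπ := Real.pi_ne_zero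
  have key := Real.sin_sq_add_cos_sq (π * v)
  have h1 : HasDerivAt (fun v : ℝ => -v ^ 3 / 12 + v ^ 2 / 4
      - (1 / 2 + 3 / (8 * π ^ 2)) * v / 2)
      (-v ^ 2 / 4 + v / 2 - (1 / 2 + 3 / (8 * π ^ 2)) / 2) v := by
    have := (((hasDerivAt_pow 3 v).neg.div_const 12).add ((hasDerivAt_pow 2 v).div_const 4)).sub
      (((hasDerivAt_id v).const_mul (1 / 2 + 3 / (8 * π ^ 2))).div_const 2)
    refine this.congr_deriv ?_ <;> ring
  have h2 : HasDerivAt (fun v : ℝ =>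
      (-v ^ 2 / 2 + v - (1 / 2 + 3 / (8 * π ^ 2))) / (4 * π) + 1 / (16 * π ^ 3))
      ((-v + 1) / (4 * π)) v := by
    have := (((((hasDerivAt_pow 2 v).neg.div_const 2).add (hasDerivAt_id v)).sub_const
      (1 / 2 + 3 / (8 * π ^ 2))).div_const (4 * π)).add_const (1 / (16 * π ^ 3))
    refine this.congr_deriv ?_ <;> ring
  have h3 : HasDerivAt (fun v : ℝ => 2 * Real.sin (π * v) * Real.cos (π * v))
      (2 * π * (1 - 2 * Real.sin (π * v) ^ 2)) v := by
    have := ((hs v).const_mul 2).mul (hc v)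
    refine this.congr_deriv ?_ <;> linear_combination (2 * π) * key
  have h4 : HasDerivAt (fun v : ℝ => (1 - v) / (8 * π ^ 2)) (-1 / (8 * π ^ 2)) v := by
    have := ((hasDerivAt_id v).const_sub 1).div_const (8 * π ^ 2)
    refine this.congr_deriv ?_ <;> ring
  have h5 : HasDerivAt (fun v : ℝ => 1 - 2 * (Real.sin (π * v) * Real.sin (π * v)))
      (-(4 * π * Real.sin (π * v) * Real.cos (π * v))) v := by
    have := (((hs v).mul (hs v)).const_mul 2).const_sub 1
    refine this.congr_deriv ?_ <;> ring
  have := (h1.sub (h2.mul h3)).sub (h4.mul h5)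
  refine this.congr_deriv ?_
  unfold f f₂
  field_simp
  ring
  done

/-- There exists a `C²` function `f₃` with `f₃(0) = f₃(1) = 0` solving
`−f₃'' − π² f₃ = −2π (f₂ − 2 (∫_0^1 f f₂) f)` on `[0,1]`. -/
theorem exists_f₃ :
    ∃ f₃ : ℝ → ℝ, ContDiff ℝ 2 f₃ ∧ f₃ 0 = 0 ∧ f₃ 1 = 0 ∧
      ∀ v ∈ Set.Icc (0:ℝ) 1,
        -deriv (deriv f₃) v - π ^ 2 * f₃ v =
          -2 * π * (f₂ v - 2 * (∫ w in (0:ℝ)..1, f w * f₂ w) * f v) := by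
  have hπ := Real.pi_ne_zero
  have hint : (∫ w in (0:ℝ)..1, f w * f₂ w) = -1/12 - 1/(16 * π ^ 2) := by
    rw [intervalIntegral.integral_eq_sub_of_hasDerivAt (fun v _ => hFi v)]
    · unfold Fi
      simp [Real.sin_pi, Real.cos_pi]
      field_simp
      ring
    · apply Continuous.intervalIntegrable
      unfold f f₂; continuity
  have hd1 : deriv F₃ = F₃d := funext fun v => (hF₃d v).deriv
  refine ⟨F₃, ?_, ?_, ?_, ?_⟩
  · unfold F₃
    have p1 : ContDiff ℝ 2 (fun v : ℝ => v ^ 3 / 6 - v ^ 2 / 2 + v / 3) :=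
      (((contDiff_id.pow 3).div_const 6).sub ((contDiff_id.pow 2).div_const 2)).add
        (contDiff_id.div_const 3)
    have p2 : ContDiff ℝ 2 (fun v : ℝ => v / (2 * π) - v ^ 2 / (4 * π)) :=
      (contDiff_id.div_const (2 * π)).sub ((contDiff_id.pow 2).div_const (4 * π))
    have t1 : ContDiff ℝ 2 (fun v : ℝ => Real.cos (π * v)) :=
      Real.contDiff_cos.comp (contDiff_const.mul contDiff_id)
    have t2 : ContDiff ℝ 2 (fun v : ℝ => Real.sin (π * v)) :=
      Real.contDiff_sin.comp (contDiff_const.mul contDiff_id)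
    exact (p1.mul t1).add (p2.mul t2)
  · unfold F₃; simp
  · unfold F₃; simp [Real.sin_pi, Real.cos_pi]; norm_num
  · intro v _
    rw [hd1, (hF₃dd v).deriv, hint]
    unfold F₃ F₃dd f f₂
    field_simp
    ring
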